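/- Let μ be a probability measure on a measurable space, let f, g, h be measurable functions into [0,1], and let ℓ be (C,α)-Hölder and satisfy the β-lower-bound condition with constants β ≥ 1 and C_β > 0. Then ∫ ℓ(f, g) dμ ≥ C_β ( ∫ |h − g| dμ )^β − C C_β^{−α/β} ( ∫ ℓ(f, h) dμ )^{α/β}. -/

import Mathlib

open MeasureTheory

/-- The loss `ℓ` is `(C,α)`-Hölder on `[0,1]²`. -/
def IsHolderLoss (ℓ : ℝ → ℝ → ℝ) (C α : ℝ) : Prop :=
  ∀ x ∈ Set.Icc (0:ℝ) 1, ∀ y ∈ Set.Icc (0:ℝ) 1, ∀ z ∈ Set.Icc (0:ℝ) 1,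
    |ℓ x y - ℓ x z| ≤ C * |y - z| ^ α ∧ |ℓ x y - ℓ z y| ≤ C * |x - z| ^ α

/-- β-lower-bound condition on the loss: `C_β |x-y|^β ≤ ℓ(x,y)` on `[0,1]²`. -/
def LossLowerBound (ℓ : ℝ → ℝ → ℝ) (Cβ β : ℝ) : Prop :=
  ∀ x ∈ Set.Icc (0:ℝ) 1, ∀ y ∈ Set.Icc (0:ℝ) 1, Cβ * |x - y| ^ β ≤ ℓ x y

namespace HolderRiskAux

/-- Projection of `ℝ` onto `[0,1]`. -/
noncomputable def proj (t : ℝ) : ℝ := max 0 (min 1 t)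

lemma proj_mem (t : ℝ) : proj t ∈ Set.Icc (0:ℝ) 1 :=
  ⟨le_max_left _ _, max_le zero_le_one (min_le_left _ _)⟩

lemma proj_eq {t : ℝ} (ht : t ∈ Set.Icc (0:ℝ) 1) : proj t = t := by
  unfold proj
  rw [min_eq_right ht.2, max_eq_right ht.1]

lemma abs_proj_sub (a b : ℝ) : |proj a - proj b| ≤ |a - b| := by
  unfold proj
  calc |max 0 (min 1 a) - max 0 (min 1 b)|
      = |max (min 1 a) 0 - max (min 1 b) 0| := by rw [max_comm 0, max_comm 0]
    _ ≤ |min 1 a - min 1 b| := abs_max_sub_max_le_abs _ _ _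
    _ ≤ max |1 - 1| |a - b| := abs_min_sub_min_le_max 1 a 1 b
    _ = |a - b| := by simp

lemma continuous_comp {ℓ : ℝ → ℝ → ℝ} {C α : ℝ} (hC : 0 < C) (hα0 : 0 < α)
    (hℓ : IsHolderLoss ℓ C α) :
    Continuous (fun p : ℝ × ℝ => ℓ (proj p.1) (proj p.2)) := by
  rw [Metric.continuous_iff]
  intro p ε hε
  refine ⟨(ε / (4 * C)) ^ α⁻¹, Real.rpow_pos_of_pos (by positivity) _, fun q hq => ?_⟩
  have hd0 : 0 ≤ dist q p := dist_nonneg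
  have h1 : |proj q.1 - proj p.1| ≤ dist q p := by
    calc |proj q.1 - proj p.1| ≤ |q.1 - p.1| := abs_proj_sub _ _
      _ = dist q.1 p.1 := (Real.dist_eq _ _).symm
      _ ≤ dist q p := by rw [Prod.dist_eq]; exact le_max_left _ _
  have h2 : |proj q.2 - proj p.2| ≤ dist q p := by
    calc |proj q.2 - proj p.2| ≤ |q.2 - p.2| := abs_proj_sub _ _
      _ = dist q.2 p.2 := (Real.dist_eq _ _).symm
      _ ≤ dist q p := by rw [Prod.dist_eq]; exact le_max_right _ _
  have key : dist (ℓ (proj q.1) (proj q.2)) (ℓ (proj p.1) (proj p.2))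
      ≤ 2 * C * dist q p ^ α := by
    rw [Real.dist_eq]
    have e1 := (hℓ (proj q.1) (proj_mem _) (proj q.2) (proj_mem _) (proj p.2) (proj_mem _)).1
    have e2 := (hℓ (proj q.1) (proj_mem _) (proj p.2) (proj_mem _) (proj p.1) (proj_mem _)).2
    have m1 : |proj q.2 - proj p.2| ^ α ≤ dist q p ^ α :=
      Real.rpow_le_rpow (abs_nonneg _) h2 hα0.le
    have m2 : |proj q.1 - proj p.1| ^ α ≤ dist q p ^ α :=
      Real.rpow_le_rpow (abs_nonneg _) h1 hα0.le
    calc |ℓ (proj q.1) (proj q.2) - ℓ (proj p.1) (proj p.2)|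
        ≤ |ℓ (proj q.1) (proj q.2) - ℓ (proj q.1) (proj p.2)|
          + |ℓ (proj q.1) (proj p.2) - ℓ (proj p.1) (proj p.2)| := abs_sub_le _ _ _
      _ ≤ C * |proj q.2 - proj p.2| ^ α + C * |proj q.1 - proj p.1| ^ α := add_le_add e1 e2
      _ ≤ C * dist q p ^ α + C * dist q p ^ α := by
          gcongr
      _ = 2 * C * dist q p ^ α := by ring
  have hbound : 2 * C * dist q p ^ α < ε := by
    have hda : dist q p ^ α ≤ ((ε / (4 * C)) ^ α⁻¹) ^ α :=
      Real.rpow_le_rpow hd0 hq.le hα0.le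
    rw [Real.rpow_inv_rpow (by positivity) hα0.ne'] at hda
    calc 2 * C * dist q p ^ α ≤ 2 * C * (ε / (4 * C)) := by
          have h2C : (0:ℝ) ≤ 2 * C := by positivity
          exact mul_le_mul_of_nonneg_left hda h2C
      _ = ε / 2 := by field_simp; ring
      _ < ε := by linarith
  exact lt_of_le_of_lt key hbound

end HolderRiskAux

/-- generic lower-bound comparison step: for a probability
measure `μ`, measurable `f, g, h` into `[0,1]` and a `(C,α)`-Hölder loss `ℓ`
satisfying the `β`-lower-bound condition with constants `β ≥ 1`, `C_β > 0`,
`∫ ℓ(f,g) dμ ≥ C_β (∫ |h - g| dμ)^β - C C_β^{-α/β} (∫ ℓ(f,h) dμ)^{α/β}`. -/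
theorem holder_risk_comparison_lower {Ω : Type*} [MeasurableSpace Ω]
    (μ : Measure Ω) [IsProbabilityMeasure μ]
    (f g h : Ω → ℝ)
    (hf : Measurable f) (hg : Measurable g) (hh : Measurable h)
    (hf01 : ∀ x, f x ∈ Set.Icc (0:ℝ) 1) (hg01 : ∀ x, g x ∈ Set.Icc (0:ℝ) 1)
    (hh01 : ∀ x, h x ∈ Set.Icc (0:ℝ) 1)
    (ℓ : ℝ → ℝ → ℝ) (C α β Cβ : ℝ) (hC : 0 < C) (hα : α ∈ Set.Ioc (0:ℝ) 1)
    (hβ : 1 ≤ β) (hCβ : 0 < Cβ)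
    (hℓ : IsHolderLoss ℓ C α) (hℓlb : LossLowerBound ℓ Cβ β)
    (hℓnn : ∀ x ∈ Set.Icc (0:ℝ) 1, ∀ y ∈ Set.Icc (0:ℝ) 1, 0 ≤ ℓ x y) :
    Cβ * (∫ x, |h x - g x| ∂μ) ^ β
        - C * Cβ ^ (-(α / β)) * (∫ x, ℓ (f x) (h x) ∂μ) ^ (α / β) ≤
      ∫ x, ℓ (f x) (g x) ∂μ := by
  obtain ⟨hα0, hα1⟩ := hα
  have hβ0 : (0:ℝ) < β := lt_of_lt_of_le one_pos hβ
  set γ : ℝ := α / β with hγdef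
  have hγ0 : 0 < γ := div_pos hα0 hβ0
  have hγ1 : γ ≤ 1 := by rw [div_le_one hβ0]; linarith
  -- continuity/measurability of compositions
  have hcont := HolderRiskAux.continuous_comp hC hα0 hℓ
  have hmeas : ∀ (u v : Ω → ℝ), Measurable u → Measurable v →
      (∀ x, u x ∈ Set.Icc (0:ℝ) 1) → (∀ x, v x ∈ Set.Icc (0:ℝ) 1) →
      Measurable (fun x => ℓ (u x) (v x)) := by
    intro u v hu hv hu01 hv01
    have : (fun x => ℓ (u x) (v x)) =
        (fun p : ℝ × ℝ => ℓ (HolderRiskAux.proj p.1) (HolderRiskAux.proj p.2)) ∘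
          (fun x => (u x, v x)) := by
      funext x
      simp [Function.comp, HolderRiskAux.proj_eq (hu01 x), HolderRiskAux.proj_eq (hv01 x)]
    rw [this]
    exact hcont.measurable.comp (hu.prodMk hv)
  -- uniform bound on ℓ over the square
  set M : ℝ := ℓ 0 0 + 2 * C with hM
  have hbound : ∀ x ∈ Set.Icc (0:ℝ) 1, ∀ y ∈ Set.Icc (0:ℝ) 1, ℓ x y ≤ M := by
    intro x hx y hy
    have h01 : (0:ℝ) ∈ Set.Icc (0:ℝ) 1 := ⟨le_refl _, zero_le_one⟩
    have e1 := (hℓ x hx y hy 0 h01).1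
    have e2 := (hℓ x hx (0:ℝ) h01 0 h01).2
    have hxa : |x - 0| ^ α ≤ 1 :=
      Real.rpow_le_one (abs_nonneg _) (by rw [sub_zero, abs_of_nonneg hx.1]; exact hx.2) hα0.le
    have hya : |y - 0| ^ α ≤ 1 :=
      Real.rpow_le_one (abs_nonneg _) (by rw [sub_zero, abs_of_nonneg hy.1]; exact hy.2) hα0.le
    have b1 : ℓ x y ≤ ℓ x 0 + C * |y - 0| ^ α := by
      have := abs_sub_le_iff.1 e1
      linarith [this.1]
    have b2 : ℓ x 0 ≤ ℓ 0 0 + C * |x - 0| ^ α := by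
      have := abs_sub_le_iff.1 e2
      linarith [this.1]
    have : C * |y - 0| ^ α ≤ C := by nlinarith
    have : C * |x - 0| ^ α ≤ C := by nlinarith
    nlinarith
  have hMnn : ∀ x ∈ Set.Icc (0:ℝ) 1, ∀ y ∈ Set.Icc (0:ℝ) 1, |ℓ x y| ≤ M := by
    intro x hx y hy
    rw [abs_of_nonneg (hℓnn x hx y hy)]
    exact hbound x hx y hy
  -- integrabilities
  have int_of_bdd : ∀ (u : Ω → ℝ) (K : ℝ), Measurable u → (∀ x, |u x| ≤ K) →
      Integrable u μ := by
    intro u K hu hK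
    exact Integrable.mono' (integrable_const K) hu.aestronglyMeasurable
      (Filter.Eventually.of_forall fun x => by simpa [Real.norm_eq_abs] using hK x)
  have Ifg : Integrable (fun x => ℓ (f x) (g x)) μ :=
    int_of_bdd _ M (hmeas f g hf hg hf01 hg01) fun x => hMnn _ (hf01 x) _ (hg01 x)
  have Ifh : Integrable (fun x => ℓ (f x) (h x)) μ :=
    int_of_bdd _ M (hmeas f h hf hh hf01 hh01) fun x => hMnn _ (hf01 x) _ (hh01 x)
  have habs1 : ∀ x, |h x - g x| ∈ Set.Icc (0:ℝ) 1 := by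
    intro x
    refine ⟨abs_nonneg _, abs_sub_le_iff.2 ⟨?_, ?_⟩⟩
    · linarith [(hh01 x).2, (hg01 x).1]
    · linarith [(hg01 x).2, (hh01 x).1]
  have Ihg : Integrable (fun x => |h x - g x|) μ :=
    int_of_bdd _ 1 ((hh.sub hg).abs) fun x => by
      rw [abs_abs]; exact (habs1 x).2
  have Ihgβ : Integrable (fun x => |h x - g x| ^ β) μ := by
    refine int_of_bdd _ 1 ?_ ?_
    · exact (Real.continuous_rpow_const hβ0.le).measurable.comp (hh.sub hg).abs
    · intro x
      rw [abs_of_nonneg (Real.rpow_nonneg (abs_nonneg _) _)]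
      exact Real.rpow_le_one (abs_nonneg _) (habs1 x).2 hβ0.le
  have Iu : Integrable (fun x => ℓ (f x) (h x) / Cβ) μ := Ifh.div_const Cβ
  have Iuγ : Integrable (fun x => (ℓ (f x) (h x) / Cβ) ^ γ) μ := by
    refine int_of_bdd _ ((M / Cβ) ^ γ) ?_ ?_
    · exact (Real.continuous_rpow_const hγ0.le).measurable.comp
        ((hmeas f h hf hh hf01 hh01).div_const Cβ)
    · intro x
      have h1 : 0 ≤ ℓ (f x) (h x) / Cβ :=
        div_nonneg (hℓnn _ (hf01 x) _ (hh01 x)) hCβ.le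
      rw [abs_of_nonneg (Real.rpow_nonneg h1 _)]
      exact Real.rpow_le_rpow h1
        (div_le_div_of_nonneg_right (hbound _ (hf01 x) _ (hh01 x)) hCβ.le) hγ0.le
  -- pointwise inequality
  have hpoint : ∀ x, Cβ * |h x - g x| ^ β - C * (ℓ (f x) (h x) / Cβ) ^ γ
      ≤ ℓ (f x) (g x) := by
    intro x
    have e2 := (hℓ (f x) (hf01 x) (g x) (hg01 x) (h x) (hh01 x)).2
    have lb := hℓlb (h x) (hh01 x) (g x) (hg01 x)
    have step1 : ℓ (h x) (g x) - C * |f x - h x| ^ α ≤ ℓ (f x) (g x) := by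
      have := abs_sub_le_iff.1 e2
      linarith [this.2]
    have step2 : |f x - h x| ^ α ≤ (ℓ (f x) (h x) / Cβ) ^ γ := by
      have lb2 := hℓlb (f x) (hf01 x) (h x) (hh01 x)
      have hfh : |f x - h x| ^ β ≤ ℓ (f x) (h x) / Cβ := by
        rw [le_div_iff₀ hCβ]
        linarith [lb2]
      have : (|f x - h x| ^ β) ^ γ ≤ (ℓ (f x) (h x) / Cβ) ^ γ :=
        Real.rpow_le_rpow (Real.rpow_nonneg (abs_nonneg _) _) hfh hγ0.le
      calc |f x - h x| ^ α = (|f x - h x| ^ β) ^ γ := by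
            rw [← Real.rpow_mul (abs_nonneg _)]
            congr 1
            rw [hγdef]
            field_simp
        _ ≤ (ℓ (f x) (h x) / Cβ) ^ γ := this
    nlinarith [mul_le_mul_of_nonneg_left step2 hC.le]
  -- integrate the pointwise inequality
  have hint1 : ∫ x, (Cβ * |h x - g x| ^ β - C * (ℓ (f x) (h x) / Cβ) ^ γ) ∂μ
      ≤ ∫ x, ℓ (f x) (g x) ∂μ :=
    integral_mono ((Ihgβ.const_mul Cβ).sub (Iuγ.const_mul C)) Ifg fun x => hpoint x
  rw [integral_sub (Ihgβ.const_mul Cβ) (Iuγ.const_mul C), integral_const_mul,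
    integral_const_mul] at hint1
  -- convex Jensen
  have jensen1 : (∫ x, |h x - g x| ∂μ) ^ β ≤ ∫ x, |h x - g x| ^ β ∂μ := by
    have hconv : ConvexOn ℝ (Set.Ici 0) fun t : ℝ => t ^ β := convexOn_rpow hβ
    have := hconv.map_integral_le
      ((Real.continuous_rpow_const hβ0.le).continuousOn)
      isClosed_Ici
      (Filter.Eventually.of_forall fun x => (habs1 x).1)
      Ihg (by exact Ihgβ)
    exact this
  -- concave Jensen
  have jensen2 : ∫ x, (ℓ (f x) (h x) / Cβ) ^ γ ∂μ
      ≤ ((∫ x, ℓ (f x) (h x) ∂μ) / Cβ) ^ γ := by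
    have hconc : ConcaveOn ℝ (Set.Ici 0) fun t : ℝ => t ^ γ :=
      Real.concaveOn_rpow hγ0.le hγ1
    have hmem : ∀ᵐ x ∂μ, ℓ (f x) (h x) / Cβ ∈ Set.Ici (0:ℝ) :=
      Filter.Eventually.of_forall fun x =>
        div_nonneg (hℓnn _ (hf01 x) _ (hh01 x)) hCβ.le
    have := hconc.le_map_integral
      ((Real.continuous_rpow_const hγ0.le).continuousOn)
      isClosed_Ici hmem Iu (by exact Iuγ)
    calc ∫ x, (ℓ (f x) (h x) / Cβ) ^ γ ∂μ ≤ (∫ x, ℓ (f x) (h x) / Cβ ∂μ) ^ γ := this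
      _ = ((∫ x, ℓ (f x) (h x) ∂μ) / Cβ) ^ γ := by rw [integral_div]
  -- combine
  have hBnn : 0 ≤ ∫ x, ℓ (f x) (h x) ∂μ :=
    integral_nonneg fun x => hℓnn _ (hf01 x) _ (hh01 x)
  have hrw : ((∫ x, ℓ (f x) (h x) ∂μ) / Cβ) ^ γ
      = Cβ ^ (-γ) * (∫ x, ℓ (f x) (h x) ∂μ) ^ γ := by
    rw [Real.div_rpow hBnn hCβ.le, Real.rpow_neg hCβ.le]
    ring
  have hγeq : -γ = -(α / β) := by rw [hγdef]
  calc Cβ * (∫ x, |h x - g x| ∂μ) ^ β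
        - C * Cβ ^ (-(α / β)) * (∫ x, ℓ (f x) (h x) ∂μ) ^ (α / β)
      ≤ Cβ * (∫ x, |h x - g x| ^ β ∂μ)
        - C * (((∫ x, ℓ (f x) (h x) ∂μ) / Cβ) ^ γ) := by
        rw [hrw, ← hγeq]
        have t1 : Cβ * (∫ x, |h x - g x| ∂μ) ^ β ≤ Cβ * ∫ x, |h x - g x| ^ β ∂μ :=
          mul_le_mul_of_nonneg_left jensen1 hCβ.le
        have t2 : C * (∫ x, (ℓ (f x) (h x) / Cβ) ^ γ ∂μ)
            ≤ C * (Cβ ^ (-γ) * (∫ x, ℓ (f x) (h x) ∂μ) ^ γ) := by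
          rw [← hrw]
          exact mul_le_mul_of_nonneg_left jensen2 hC.le
        linarith [mul_le_mul_of_nonneg_left jensen2 hC.le]
    _ ≤ ∫ x, ℓ (f x) (g x) ∂μ := by
        have t2 : C * (∫ x, (ℓ (f x) (h x) / Cβ) ^ γ ∂μ)
            ≤ C * (((∫ x, ℓ (f x) (h x) ∂μ) / Cβ) ^ γ) :=
          mul_le_mul_of_nonneg_left jensen2 hC.le
        linarith
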